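/- Let R be a commutative ℚ-algebra and f₁, …, f_p ∈ R. Let K_•(f₁, …, f_p) be the Koszul complex, with K_i = Λ^i(R^p) and differentials A_i : Λ^i(R^p) → Λ^{i−1}(R^p) given by contraction with the linear functional e_j ↦ f_j, and let dA_i denote the matrix of A_i (in the standard bases) with the universal derivation d : R → Ω¹_{R/ℚ} applied entrywise. Then the composite dA₁ ∘ dA₂ ∘ ⋯ ∘ dA_p : K_p → K₀ ⊗ Ω^p_{R/ℚ}, under the identifications K_p ≅ R and K₀ ≅ R, is multiplication by p! · df₁ ∧ df₂ ∧ ⋯ ∧ df_p ∈ Ω^p_{R/ℚ}. In particular, the degree-p local fundamental class (1/p!) dA₁ ∘ ⋯ ∘ dA_p of the Koszul complex equals df₁ ∧ ⋯ ∧ df_p. -/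

import Mathlib

noncomputable section

/-- The standard basis of the `i`-th exterior power `Λ^i(R^p)`, indexed by the `i`-element
subsets of `Fin p` (an `i`-element subset `{j₁ < ⋯ < jᵢ}` corresponds to
`e_{j₁} ∧ ⋯ ∧ e_{jᵢ}`). -/
abbrev KoszulIdx (p i : ℕ) := { s : Finset (Fin p) // s.card = i }

variable {R : Type*} [CommRing R]

/-- The entry of the Koszul differential `A_{i+1} : Λ^{i+1}(R^p) → Λ^i(R^p)` (contraction with
the functional `e_j ↦ f j`) in the standard bases, at row `t` (an `i`-element subset) and
column `s` (an `(i+1)`-element subset):  it is `(-1)^{k+1} f_{j_k}` if `s = t ∪ {j_k}` with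
`j_k` the `k`-th smallest element of `s`, and `0` otherwise. -/
def koszulEntry (p : ℕ) (f : Fin p → R) (i : ℕ) (t : KoszulIdx p i) (s : KoszulIdx p (i + 1)) :
    R :=
  ∑ j ∈ s.1 \ t.1,
    if insert j t.1 = s.1 then (-1 : R) ^ (s.1.filter (fun x => x < j)).card * f j else 0

variable (R) in
/-- The exterior algebra of the module of Kähler differentials `Ω¹_{R/ℚ}` over `R`. -/
abbrev LambdaOmega [Algebra ℚ R] := ExteriorAlgebra R (KaehlerDifferential ℚ R)

/-- The matrix `dA_{i+1}` of the Koszul differential with the universal derivation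
`d : R → Ω¹_{R/ℚ}` applied entrywise, viewed in the exterior algebra of `Ω¹_{R/ℚ}`. -/
def dKoszul [Algebra ℚ R] (p : ℕ) (f : Fin p → R) (i : ℕ) :
    Matrix (KoszulIdx p i) (KoszulIdx p (i + 1)) (LambdaOmega R) :=
  fun t s => ExteriorAlgebra.ι R ((KaehlerDifferential.D ℚ R) (koszulEntry p f i t s))

/-- The composite `dA₁ ∘ dA₂ ∘ ⋯ ∘ dA_i : K_i → K₀ ⊗ Ω^i_{R/ℚ}` as a matrix with entries in
the exterior algebra of `Ω¹_{R/ℚ}` (entries of the factors are multiplied in the order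
`dA_i, dA_{i-1}, …, dA₁` along each path of basis elements). -/
def dKoszulComp [Algebra ℚ R] (p : ℕ) (f : Fin p → R) :
    (i : ℕ) → Matrix (KoszulIdx p i) (KoszulIdx p 0) (LambdaOmega R)
  | 0 => (1 : Matrix (KoszulIdx p 0) (KoszulIdx p 0) (LambdaOmega R))
  | i + 1 => (dKoszul p f i).transpose * dKoszulComp p f i

open Finset ExteriorAlgebra

/-- swap lemma -/
lemma myswap {M : Type*} [AddCommGroup M] [Module R M] (a : M) (l : List M) :
    ι R a * (l.map (ι R)).prod = ((-1 : ℤ) ^ l.length) • ((l.map (ι R)).prod * ι R a) := by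
  induction l with
  | nil => simp
  | cons b l ih =>
    have hswap : ι R a * ι R b = -(ι R b * ι R a) :=
      eq_neg_of_add_eq_zero_left (ι_add_mul_swap a b)
    simp only [List.map_cons, List.prod_cons, List.length_cons]
    calc ι R a * (ι R b * (l.map (ι R)).prod)
        = (ι R a * ι R b) * (l.map (ι R)).prod := by rw [mul_assoc]
      _ = -(ι R b * (ι R a * (l.map (ι R)).prod)) := by rw [hswap, neg_mul, mul_assoc]
      _ = -(ι R b * (((-1 : ℤ) ^ l.length) • ((l.map (ι R)).prod * ι R a))) := by rw [ih]
      _ = ((-1 : ℤ) ^ (l.length + 1)) • (ι R b * (l.map (ι R)).prod * ι R a) := by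
          rw [mul_smul_comm, ← mul_assoc, ← neg_smul, pow_succ, mul_neg_one]

/-- multiset split -/
lemma filter_not_lt (p : ℕ) (s : Finset (Fin p)) (j : Fin p) (hj : j ∈ s) :
    s.filter (fun x => ¬ x < j) = insert j (s.filter (fun x => j < x)) := by
  ext x
  simp only [Finset.mem_filter, Finset.mem_insert, not_lt]
  constructor
  · rintro ⟨hx, hle⟩
    rcases eq_or_lt_of_le hle with h | h
    · exact Or.inl h.symm
    · exact Or.inr ⟨hx, h⟩
  · rintro (rfl | ⟨hx, h⟩)
    · exact ⟨hj, le_refl _⟩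
    · exact ⟨hx, h.le⟩

lemma sort_split (p : ℕ) (s : Finset (Fin p)) (j : Fin p) (hj : j ∈ s) :
    (s.filter (· < j)).sort (· ≤ ·) ++ j :: (s.filter (fun x => j < x)).sort (· ≤ ·)
      = s.sort (· ≤ ·) := by
  refine (fun hp hs => List.Perm.eq_of_pairwise' hs (Finset.pairwise_sort _ _) hp) ?_ ?_
  · rw [← Multiset.coe_eq_coe, ← Multiset.coe_add, ← Multiset.cons_coe]
    simp only [Finset.sort_eq]
    have h2 : j ::ₘ (s.filter (fun x => j < x)).val
        = (insert j (s.filter (fun x => j < x))).val := by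
      rw [Finset.insert_val_of_notMem]
      simp
    rw [h2, ← filter_not_lt p s j hj]
    simp only [Finset.filter_val]
    exact Multiset.filter_add_not _ _
  · show List.Pairwise _ _
    rw [List.pairwise_append]
    refine ⟨Finset.pairwise_sort _ _, ?_, ?_⟩
    · rw [List.pairwise_cons]
      refine ⟨fun b hb => ?_, Finset.pairwise_sort _ _⟩
      rw [Finset.mem_sort] at hb
      exact (Finset.mem_filter.mp hb).2.le
    · intro x hx y hy
      rw [Finset.mem_sort] at hx
      have hxj : x < j := (Finset.mem_filter.mp hx).2
      rcases List.mem_cons.mp hy with rfl | hy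
      · exact hxj.le
      · rw [Finset.mem_sort] at hy
        exact (hxj.trans (Finset.mem_filter.mp hy).2).le

lemma sort_split_erase (p : ℕ) (s : Finset (Fin p)) (j : Fin p) (hj : j ∈ s) :
    (s.filter (· < j)).sort (· ≤ ·) ++ (s.filter (fun x => j < x)).sort (· ≤ ·)
      = (s.erase j).sort (· ≤ ·) := by
  refine (fun hp hs => List.Perm.eq_of_pairwise' hs (Finset.pairwise_sort _ _) hp) ?_ ?_
  · rw [← Multiset.coe_eq_coe, ← Multiset.coe_add]
    simp only [Finset.sort_eq]
    have e1 : (s.erase j).filter (· < j) = s.filter (· < j) := by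
      ext x
      simp only [Finset.mem_filter, Finset.mem_erase]
      exact ⟨fun ⟨⟨_, hx⟩, hlt⟩ => ⟨hx, hlt⟩, fun ⟨hx, hlt⟩ => ⟨⟨hlt.ne, hx⟩, hlt⟩⟩
    have e2 : (s.erase j).filter (fun x => ¬ x < j) = s.filter (fun x => j < x) := by
      ext x
      simp only [Finset.mem_filter, Finset.mem_erase, not_lt]
      constructor
      · rintro ⟨⟨hne, hx⟩, hle⟩
        exact ⟨hx, lt_of_le_of_ne hle (Ne.symm hne)⟩
      · rintro ⟨hx, hlt⟩
        exact ⟨⟨hlt.ne', hx⟩, hlt.le⟩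
    rw [← e1, ← e2]
    simp only [Finset.filter_val]
    exact Multiset.filter_add_not _ _
  · show List.Pairwise _ _
    rw [List.pairwise_append]
    refine ⟨Finset.pairwise_sort _ _, Finset.pairwise_sort _ _, ?_⟩
    intro x hx y hy
    rw [Finset.mem_sort] at hx hy
    exact ((Finset.mem_filter.mp hx).2.trans (Finset.mem_filter.mp hy).2).le



section
variable [Algebra ℚ R]

def Pprod (p : ℕ) (f : Fin p → R) (t : Finset (Fin p)) : LambdaOmega R :=
  ((t.sort (· ≤ ·)).map fun j => ι R ((KaehlerDifferential.D ℚ R) (f j))).prod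

lemma Pprod_empty (p : ℕ) (f : Fin p → R) : Pprod p f ∅ = 1 := by
  simp [Pprod, Finset.sort_empty]

lemma Pprod_univ (p : ℕ) (f : Fin p → R) :
    Pprod p f Finset.univ =
      (List.ofFn fun j => ι R ((KaehlerDifferential.D ℚ R) (f j))).prod := by
  rw [Pprod, Fin.sort_univ, List.ofFn_eq_map]

lemma Pprod_erase (p : ℕ) (f : Fin p → R) (s : Finset (Fin p)) (j : Fin p) (hj : j ∈ s) :
    ι R ((KaehlerDifferential.D ℚ R) (f j)) * Pprod p f (s.erase j)
      = ((-1 : ℤ) ^ (s.filter (· < j)).card) • Pprod p f s := by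
  set g : Fin p → LambdaOmega R := fun j => ι R ((KaehlerDifferential.D ℚ R) (f j)) with hg
  set A := (s.filter (· < j)).sort (· ≤ ·) with hA
  set B := (s.filter (fun x => j < x)).sort (· ≤ ·) with hB
  have hAlen : A.length = (s.filter (· < j)).card := Finset.length_sort _
  have hPs : Pprod p f s = (A.map g).prod * (g j * (B.map g).prod) := by
    rw [Pprod, ← sort_split p s j hj, List.map_append, List.prod_append, List.map_cons,
      List.prod_cons]
  have hPe : Pprod p f (s.erase j) = (A.map g).prod * (B.map g).prod := by
    rw [Pprod, ← sort_split_erase p s j hj, List.map_append, List.prod_append]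
  have hmapA : A.map g = (A.map fun j => (KaehlerDifferential.D ℚ R) (f j)).map (ι R) := by
    rw [List.map_map]; rfl
  have hsw := myswap (R := R) ((KaehlerDifferential.D ℚ R) (f j))
      (A.map fun j => (KaehlerDifferential.D ℚ R) (f j))
  rw [← hmapA] at hsw
  simp only [List.length_map, hAlen] at hsw
  rw [hPe, ← mul_assoc]
  show (g j * (A.map g).prod) * (B.map g).prod = _
  rw [hsw, smul_mul_assoc, mul_assoc]
  rw [hPs]

lemma insert_iff_koszul {p : ℕ} {i : ℕ} (s : Finset (Fin p)) (hs : s.card = i + 1)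
    (j : Fin p) (hj : j ∈ s) (t : KoszulIdx p i) :
    insert j t.1 = s ↔ t = ⟨s.erase j, by simp [Finset.card_erase_of_mem hj, hs]⟩ := by
  constructor
  · intro h
    have hjt : j ∉ t.1 := by
      intro hmem
      rw [Finset.insert_eq_self.mpr hmem] at h
      have := t.2
      rw [h, hs] at this
      omega
    apply Subtype.ext
    show t.1 = s.erase j
    rw [← h, Finset.erase_insert hjt]
  · rintro rfl
    exact Finset.insert_erase hj

lemma koszulEntry_eq {p : ℕ} (f : Fin p → R) (i : ℕ) (t : KoszulIdx p i)
    (s : KoszulIdx p (i + 1)) :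
    koszulEntry p f i t s =
      ∑ j ∈ s.1, if insert j t.1 = s.1
        then (-1 : R) ^ (s.1.filter (fun x => x < j)).card * f j else 0 := by
  rw [koszulEntry]
  apply Finset.sum_subset (Finset.sdiff_subset)
  intro j hjs hj
  have hjt : j ∈ t.1 := by
    by_contra hc
    exact hj (Finset.mem_sdiff.mpr ⟨hjs, hc⟩)
  rw [if_neg]
  intro h
  have := t.2
  rw [Finset.insert_eq_self.mpr hjt] at h
  rw [h, s.2] at this
  omega

lemma per_j (p : ℕ) (f : Fin p → R) (i : ℕ) (s : Finset (Fin p)) (j : Fin p) (hj : j ∈ s) :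
    ι R ((KaehlerDifferential.D ℚ R)
        ((-1 : R) ^ (s.filter (fun x => x < j)).card * f j)) *
      (i.factorial • Pprod p f (s.erase j)) = i.factorial • Pprod p f s := by
  set k := (s.filter (fun x => x < j)).card with hk
  have hD : (KaehlerDifferential.D ℚ R) ((-1 : R) ^ k * f j)
      = ((-1 : ℤ) ^ k) • (KaehlerDifferential.D ℚ R) (f j) := by
    rcases Nat.even_or_odd k with he | ho
    · rw [he.neg_one_pow, he.neg_one_pow, one_mul, one_smul]
    · rw [ho.neg_one_pow, ho.neg_one_pow, neg_one_mul, map_neg, neg_one_smul]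
  rw [hD, map_zsmul, smul_mul_assoc, mul_smul_comm]
  have herase : ι R ((KaehlerDifferential.D ℚ R) (f j)) * Pprod p f (s.erase j)
      = ((-1 : ℤ) ^ k) • Pprod p f s := by
    have := Pprod_erase p f s j hj
    convert this using 3
  rw [herase, ← Nat.cast_smul_eq_nsmul ℤ, smul_smul, smul_smul]
  have hcoef : (-1 : ℤ) ^ k * (i.factorial : ℤ) * (-1 : ℤ) ^ k = (i.factorial : ℤ) := by
    have h1 : ((-1 : ℤ) ^ k) * ((-1 : ℤ) ^ k) = 1 := by
      rw [← pow_add]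
      exact Even.neg_one_pow ⟨k, rfl⟩
    calc (-1 : ℤ) ^ k * (i.factorial : ℤ) * (-1 : ℤ) ^ k
        = (i.factorial : ℤ) * (((-1 : ℤ) ^ k) * ((-1 : ℤ) ^ k)) := by ring
      _ = (i.factorial : ℤ) := by rw [h1, mul_one]
  rw [hcoef, Nat.cast_smul_eq_nsmul]

lemma dKoszulComp_eq (p : ℕ) (f : Fin p → R) :
    ∀ (i : ℕ) (s : Finset (Fin p)) (h : s.card = i),
      dKoszulComp p f i ⟨s, h⟩ ⟨∅, rfl⟩ = i.factorial • Pprod p f s := by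
  intro i
  induction i with
  | zero =>
    intro s h
    have hs : s = ∅ := Finset.card_eq_zero.mp h
    subst hs
    rw [dKoszulComp]
    rw [Matrix.one_apply_eq]
    rw [Pprod_empty]
    simp
  | succ i ih =>
    intro s h
    rw [dKoszulComp, Matrix.mul_apply]
    have step1 : ∀ t' : KoszulIdx p i,
        (dKoszul p f i).transpose ⟨s, h⟩ t' * dKoszulComp p f i t' ⟨∅, rfl⟩
          = ∑ j ∈ s, if insert j t'.1 = s
              then ι R ((KaehlerDifferential.D ℚ R)
                  ((-1 : R) ^ (s.filter (fun x => x < j)).card * f j)) *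
                (i.factorial • Pprod p f t'.1) else 0 := by
      intro t'
      have hcomp : dKoszulComp p f i t' ⟨∅, rfl⟩ = i.factorial • Pprod p f t'.1 :=
        ih t'.1 t'.2
      rw [Matrix.transpose_apply, hcomp, dKoszul, koszulEntry_eq, map_sum, map_sum,
        Finset.sum_mul]
      apply Finset.sum_congr rfl
      intro j _
      rw [apply_ite (KaehlerDifferential.D ℚ R), apply_ite (ι R), map_zero, map_zero,
        ite_mul, zero_mul]
    rw [Finset.sum_congr rfl (fun t' _ => step1 t'), Finset.sum_comm]
    have step2 : ∀ j ∈ s,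
        (∑ t' : KoszulIdx p i, if insert j t'.1 = s
            then ι R ((KaehlerDifferential.D ℚ R)
                ((-1 : R) ^ (s.filter (fun x => x < j)).card * f j)) *
              (i.factorial • Pprod p f t'.1) else 0)
          = i.factorial • Pprod p f s := by
      intro j hj
      rw [Finset.sum_congr rfl
        (fun t' _ => if_congr (insert_iff_koszul s h j hj t') rfl rfl)]
      rw [Finset.sum_ite_eq' Finset.univ
        (⟨s.erase j, by simp [Finset.card_erase_of_mem hj, h]⟩ : KoszulIdx p i)]
      rw [if_pos (Finset.mem_univ _)]
      exact per_j p f i s j hj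
    rw [Finset.sum_congr rfl step2, Finset.sum_const, h, smul_smul, Nat.factorial_succ]


end

/-- Let `R` be a commutative `ℚ`-algebra and `f₁, …, f_p ∈ R`.  The composite
`dA₁ ∘ dA₂ ∘ ⋯ ∘ dA_p : K_p → K₀ ⊗ Ω^p_{R/ℚ}` of the entrywise differentials of the Koszul
differentials, under the identifications `K_p ≅ R` (basis `e₁ ∧ ⋯ ∧ e_p`, i.e. the full subset
`univ`) and `K₀ ≅ R` (basis `1`, i.e. the empty subset), is multiplication by
`p! · df₁ ∧ df₂ ∧ ⋯ ∧ df_p ∈ Ω^p_{R/ℚ}`; in particular the degree-`p` local fundamental class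
`(1/p!) dA₁ ∘ ⋯ ∘ dA_p` of the Koszul complex equals `df₁ ∧ ⋯ ∧ df_p`. -/
theorem stmt5 [Algebra ℚ R] (p : ℕ) (f : Fin p → R) :
    dKoszulComp p f p ⟨Finset.univ, by simp⟩ ⟨∅, by simp⟩ =
      (p.factorial : ℕ) •
        (List.ofFn fun j =>
          ExteriorAlgebra.ι R ((KaehlerDifferential.D ℚ R) (f j))).prod := by
  have h : (Finset.univ : Finset (Fin p)).card = p := by simp
  have key := dKoszulComp_eq p f p Finset.univ h
  rw [Pprod_univ] at key
  exact key

end
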